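/- Define F⁻ on {(x⁰, x'; ξ₀, ξ') ∈ ℝ × ℝ³ × ℝ × ℝ³ : ξ' ≠ 0} by F⁻(x⁰, x'; ξ₀, ξ') = (x⁰, x' + x⁰ ξ'/|ξ'|; ξ₀ − |ξ'|, ξ'). Then F⁻ preserves the canonical symplectic form on T*ℝ⁴ ≅ ℝ⁴ × ℝ⁴; equivalently, at every point of its domain the derivative matrix dF⁻ satisfies (dF⁻)ᵀ J (dF⁻) = J, where J is the canonical symplectic matrix (J(δx, δξ) block form: J = [[0, I],[−I, 0]] pairing position and momentum). Moreover, F⁻ maps the set {(0,0; ξ₀, ξ') : ξ' ≠ 0} into itself, and for every t ∈ ℝ, θ ∈ S² and λ < 0 it satisfies F⁻(t, tθ; −λ, λθ) = (t, 0; 0, λθ). -/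

import Mathlib

open Matrix

/-- The Euclidean norm on `ℝ³`. -/
noncomputable def enorm3 (v : Fin 3 → ℝ) : ℝ := Real.sqrt (∑ i, v i ^ 2)

/-- The homogeneous transformation
`F⁻(x⁰, x'; ξ₀, ξ') = (x⁰, x' + x⁰ ξ'/|ξ'|; ξ₀ - |ξ'|, ξ')` of Appendix B. -/
noncomputable def Fminus :
    (ℝ × (Fin 3 → ℝ)) × (ℝ × (Fin 3 → ℝ)) → (ℝ × (Fin 3 → ℝ)) × (ℝ × (Fin 3 → ℝ)) :=
  fun p => ((p.1.1, p.1.2 + (p.1.1 / enorm3 p.2.2) • p.2.2),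
            (p.2.1 - enorm3 p.2.2, p.2.2))

/-- The canonical symplectic form `∑ dξᵢ ∧ dxⁱ` on `T*ℝ⁴ ≅ ℝ⁴ × ℝ⁴`, evaluated on a
pair of tangent vectors `u = (δx, δξ)`, `v = (δy, δη)`:
`ω(u, v) = ⟨δξ, δy⟩ - ⟨δη, δx⟩`. -/
def symp (u v : (ℝ × (Fin 3 → ℝ)) × (ℝ × (Fin 3 → ℝ))) : ℝ :=
  (u.2.1 * v.1.1 + u.2.2 ⬝ᵥ v.1.2) - (v.2.1 * u.1.1 + v.2.2 ⬝ᵥ u.1.2)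

/-- Dot product with a fixed vector, as a continuous linear map. -/
noncomputable def dotCLM (v : Fin 3 → ℝ) : (Fin 3 → ℝ) →L[ℝ] ℝ :=
  LinearMap.toContinuousLinearMap
    { toFun := fun w => v ⬝ᵥ w
      map_add' := fun a b => dotProduct_add v a b
      map_smul' := fun c a => dotProduct_smul c v a }

@[simp] lemma dotCLM_apply (v w : Fin 3 → ℝ) : dotCLM v w = v ⬝ᵥ w := rfl

lemma enorm3_pos {v : Fin 3 → ℝ} (hv : v ≠ 0) : 0 < enorm3 v := by
  apply Real.sqrt_pos.2
  have : ∃ i, v i ≠ 0 := by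
    by_contra h; push_neg at h; exact hv (funext h)
  obtain ⟨i, hi⟩ := this
  exact Finset.sum_pos' (fun j _ => sq_nonneg _) ⟨i, Finset.mem_univ i, by positivity⟩

lemma sq_enorm3 (v : Fin 3 → ℝ) : enorm3 v ^ 2 = ∑ i, v i ^ 2 := by
  rw [enorm3, Real.sq_sqrt]; positivity

lemma enorm3_smul (c : ℝ) (v : Fin 3 → ℝ) : enorm3 (c • v) = |c| * enorm3 v := by
  unfold enorm3
  have : ∑ i, (c • v) i ^ 2 = c ^ 2 * ∑ i, v i ^ 2 := by
    simp [Finset.mul_sum, mul_pow]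
  rw [this, Real.sqrt_mul (by positivity), Real.sqrt_sq_eq_abs]

lemma hasFDerivAt_enorm3 {v : Fin 3 → ℝ} (hv : v ≠ 0) :
    HasFDerivAt enorm3 ((enorm3 v)⁻¹ • dotCLM v) v := by
  have hq : HasFDerivAt (fun w : Fin 3 → ℝ => ∑ i, w i ^ 2) ((2:ℝ) • dotCLM v) v := by
    have : ∀ i : Fin 3, HasFDerivAt (fun w : Fin 3 → ℝ => w i ^ 2)
        ((2 * v i) • (ContinuousLinearMap.proj i : (Fin 3 → ℝ) →L[ℝ] ℝ)) v := by
      intro i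
      have hp := (ContinuousLinearMap.proj i : (Fin 3 → ℝ) →L[ℝ] ℝ).hasFDerivAt (x := v)
      have hm := hp.mul hp
      simp only [ContinuousLinearMap.proj_apply] at hm
      have : (fun w : Fin 3 → ℝ => w i ^ 2) = fun w => w i * w i := by
        ext w; ring
      rw [this]
      refine hm.congr_fderiv ?_
      ext w
      simp only [two_mul, add_smul, ContinuousLinearMap.add_apply,
        ContinuousLinearMap.smul_apply, ContinuousLinearMap.proj_apply, smul_eq_mul]
    have h := HasFDerivAt.fun_sum (fun i (_ : i ∈ Finset.univ) => this i)
    refine h.congr_fderiv ?_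
    ext w
    simp [dotProduct, Finset.mul_sum, Finset.smul_sum, mul_comm, mul_assoc, mul_left_comm]
  have hpos : (0:ℝ) < ∑ i, v i ^ 2 := by
    have := enorm3_pos hv; rw [← sq_enorm3]; positivity
  have hs := (Real.hasDerivAt_sqrt (ne_of_gt hpos)).comp_hasFDerivAt v hq
  refine hs.congr_fderiv ?_
  ext w
  have : Real.sqrt (∑ i, v i ^ 2) = enorm3 v := rfl
  simp [this]
  field_simp

/-- The phase space `T*ℝ⁴ ≅ ℝ⁴ × ℝ⁴`. -/
abbrev Esp := (ℝ × (Fin 3 → ℝ)) × (ℝ × (Fin 3 → ℝ))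

noncomputable def Acl : Esp →L[ℝ] ℝ :=
  (ContinuousLinearMap.fst ℝ ℝ (Fin 3 → ℝ)).comp (ContinuousLinearMap.fst ℝ _ _)
noncomputable def Bcl : Esp →L[ℝ] (Fin 3 → ℝ) :=
  (ContinuousLinearMap.snd ℝ ℝ (Fin 3 → ℝ)).comp (ContinuousLinearMap.fst ℝ _ _)
noncomputable def Ccl : Esp →L[ℝ] ℝ :=
  (ContinuousLinearMap.fst ℝ ℝ (Fin 3 → ℝ)).comp (ContinuousLinearMap.snd ℝ _ _)
noncomputable def Dcl : Esp →L[ℝ] (Fin 3 → ℝ) :=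
  (ContinuousLinearMap.snd ℝ ℝ (Fin 3 → ℝ)).comp (ContinuousLinearMap.snd ℝ _ _)
@[simp] lemma Acl_apply (q : Esp) : Acl q = q.1.1 := rfl
@[simp] lemma Bcl_apply (q : Esp) : Bcl q = q.1.2 := rfl
@[simp] lemma Ccl_apply (q : Esp) : Ccl q = q.2.1 := rfl
@[simp] lemma Dcl_apply (q : Esp) : Dcl q = q.2.2 := rfl

/-- Appendix B of the paper: `F⁻` is symplectic on `{ξ' ≠ 0}` (its derivative
preserves the canonical symplectic form), it maps the conormal fibre of the origin
`{(0,0; ξ₀, ξ') : ξ' ≠ 0}` into itself, and it maps the past-frequency light-cone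
flowout to the model Lagrangian: `F⁻(t, tθ; -λ, λθ) = (t, 0; 0, λθ)` for `λ < 0`,
`θ ∈ S²`. -/
theorem stmt_10 :
    (∀ p : (ℝ × (Fin 3 → ℝ)) × (ℝ × (Fin 3 → ℝ)), p.2.2 ≠ 0 →
      ∃ D : ((ℝ × (Fin 3 → ℝ)) × (ℝ × (Fin 3 → ℝ))) →L[ℝ] ((ℝ × (Fin 3 → ℝ)) × (ℝ × (Fin 3 → ℝ))), HasFDerivAt Fminus D p ∧ ∀ u v, symp (D u) (D v) = symp u v) ∧
    (∀ (ξ₀ : ℝ) (ξ' : Fin 3 → ℝ), ξ' ≠ 0 →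
      Fminus ((0, 0), (ξ₀, ξ')) = ((0, 0), (ξ₀ - enorm3 ξ', ξ'))) ∧
    (∀ (t l : ℝ) (θ : Fin 3 → ℝ), enorm3 θ = 1 → l < 0 →
      Fminus ((t, t • θ), (-l, l • θ)) = ((t, 0), (0, l • θ))) := by
  refine ⟨?_, ?_, ?_⟩
  · intro p hp
    have hn := enorm3_pos hp
    have hN : HasFDerivAt (fun q : Esp => enorm3 q.2.2)
        (((enorm3 p.2.2)⁻¹ • dotCLM p.2.2).comp Dcl) p :=
      ((hasFDerivAt_enorm3 hp).comp p (Dcl.hasFDerivAt) :)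
    have hinv := (hasDerivAt_inv (ne_of_gt hn)).comp_hasFDerivAt p hN
    have hg := (Acl.hasFDerivAt (x := p)).mul hinv
    have h2 := (Bcl.hasFDerivAt (x := p)).add (hg.smul (Dcl.hasFDerivAt (x := p)))
    have h1 := HasFDerivAt.prodMk (Acl.hasFDerivAt (x := p)) h2
    have h3 := HasFDerivAt.prodMk ((Ccl.hasFDerivAt (x := p)).sub hN) (Dcl.hasFDerivAt (x := p))
    have hF := HasFDerivAt.prodMk h1 h3
    have hFm : Fminus = fun q : Esp => ((q.1.1, q.1.2 + (q.1.1 * (enorm3 q.2.2)⁻¹) • q.2.2),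
        (q.2.1 - enorm3 q.2.2, q.2.2)) := by
      funext q; simp [Fminus, div_eq_mul_inv]
    refine ⟨(Acl.prod (Bcl + ((p.1.1 * (enorm3 p.2.2)⁻¹) • Dcl +
        (p.1.1 • -(enorm3 p.2.2 ^ 2)⁻¹ • ((enorm3 p.2.2)⁻¹ • dotCLM p.2.2).comp Dcl +
          (enorm3 p.2.2)⁻¹ • Acl).smulRight p.2.2))).prod
        ((Ccl - ((enorm3 p.2.2)⁻¹ • dotCLM p.2.2).comp Dcl).prod Dcl), ?_, ?_⟩
    · rw [hFm]; exact hF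
    · intro u v
      simp only [symp, ContinuousLinearMap.prod_apply, ContinuousLinearMap.add_apply,
        ContinuousLinearMap.sub_apply, ContinuousLinearMap.comp_apply,
        ContinuousLinearMap.smul_apply, ContinuousLinearMap.smulRight_apply,
        Acl_apply, Bcl_apply, Ccl_apply, Dcl_apply, dotCLM_apply, smul_eq_mul,
        dotProduct_add, add_dotProduct, dotProduct_smul, smul_dotProduct,
        sub_dotProduct, dotProduct_sub]
      rw [dotProduct_comm u.2.2 p.2.2, dotProduct_comm v.2.2 p.2.2, dotProduct_comm v.2.2 u.2.2]
      ring
  · intro ξ₀ ξ' hξ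
    simp [Fminus]
  · intro t l θ hθ hl
    have hl' : l ≠ 0 := ne_of_lt hl
    have hn : enorm3 (l • θ) = -l := by
      rw [enorm3_smul, hθ, abs_of_neg hl, mul_one]
    simp only [Fminus, hn]
    refine Prod.ext (Prod.ext rfl ?_) (Prod.ext (by ring) rfl)
    simp only [smul_smul]
    have : t / -l * l = -t := by
      rw [div_neg, neg_mul, div_mul_cancel₀ t hl']
    rw [this]
    simp
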